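/- arXiv:0907.0986 — 5 statements merged into one kernel-verified Lean document; each statement's English description precedes it below -/
import Mathlib

section
/- Let G be a type and let p be an extended nonnegative real with 1 ≤ p. Define a map Θ on ℓ¹(G; ℓ^p(G)) by letting the s-th component of Θ(u) be (u s s) • δ_s^{(p)}, i.e. the value of the family u(s) ∈ ℓ^p(G) at the point s times the standard basis vector δ_s^{(p)} of ℓ^p(G). Then for every u ∈ ℓ¹(G; ℓ^p(G)) the family Θ(u) again belongs to ℓ¹(G; ℓ^p(G)), the map Θ is linear, and ‖Θ(u)‖ ≤ ‖u‖. -/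
open ENNReal

noncomputable def mkLp {α : Type*} {E : α → Type*} [∀ i, NormedAddCommGroup (E i)] {p : ℝ≥0∞}
    (f : ∀ i, E i) (hf : Memℓp f p) : lp E p := ⟨f, hf⟩

@[simp] theorem mkLp_apply {α : Type*} {E : α → Type*} [∀ i, NormedAddCommGroup (E i)] {p : ℝ≥0∞}
    (f : ∀ i, E i) (hf : Memℓp f p) (i : α) : (mkLp f hf : ∀ i, E i) i = f i := rfl

theorem theta_linear_contraction_lp
    (G : Type*) (p : ℝ≥0∞) [Fact (1 ≤ p)] [DecidableEq G] :
    (∀ u : lp (fun _ : G => lp (fun _ : G => ℂ) p) 1,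
        Memℓp (fun s : G => ((u s s) • lp.single p s (1 : ℂ) : lp (fun _ : G => ℂ) p)) 1) ∧
    ∃ Θ : lp (fun _ : G => lp (fun _ : G => ℂ) p) 1 →ₗ[ℂ]
          lp (fun _ : G => lp (fun _ : G => ℂ) p) 1,
      (∀ (u : lp (fun _ : G => lp (fun _ : G => ℂ) p) 1) (s : G),
          Θ u s = ((u s s) • lp.single p s (1 : ℂ) : lp (fun _ : G => ℂ) p)) ∧
      ∀ u : lp (fun _ : G => lp (fun _ : G => ℂ) p) 1, ‖Θ u‖ ≤ ‖u‖ := by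
  have hp1 : (1 : ℝ≥0∞) ≤ p := Fact.out
  have hp0 : p ≠ 0 := by intro h; simp [h] at hp1
  have h1 : (0:ℝ) < (1 : ℝ≥0∞).toReal := by norm_num
  have hsingle : ∀ s : G, ‖(lp.single p s (1 : ℂ) : lp (fun _ : G => ℂ) p)‖ = 1 := by
    intro s
    rcases eq_or_ne p ∞ with hp | hp
    · subst hp
      refine le_antisymm ?_ ?_
      · refine lp.norm_le_of_forall_le zero_le_one fun i => ?_
        rcases eq_or_ne i s with rfl | hi
        · simp [lp.single_apply_self]
        · simp [lp.single_apply_ne _ _ _ hi, Pi.single_eq_of_ne hi]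
      · have h2 := lp.norm_apply_le_norm ENNReal.top_ne_zero
          (lp.single (E := fun _ : G => ℂ) ∞ s (1 : ℂ)) s
        rw [lp.single_apply_self] at h2
        rw [norm_one] at h2; exact h2
    · have hpt : 0 < p.toReal := ENNReal.toReal_pos hp0 hp
      simpa using lp.norm_single (E := fun _ : G => ℂ) (p := p) (pos_iff_ne_zero.mpr hp0) s (1 : ℂ)
  have hbound : ∀ (u : lp (fun _ : G => lp (fun _ : G => ℂ) p) 1) (s : G),
      ‖((u s s) • lp.single p s (1 : ℂ) : lp (fun _ : G => ℂ) p)‖ ≤ ‖u s‖ := by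
    intro u s
    rw [norm_smul, hsingle s, mul_one]
    exact lp.norm_apply_le_norm hp0 (u s) s
  have hmem : ∀ u : lp (fun _ : G => lp (fun _ : G => ℂ) p) 1,
      Memℓp (fun s : G => ((u s s) • lp.single p s (1 : ℂ) : lp (fun _ : G => ℂ) p)) 1 := by
    intro u
    apply memℓp_gen
    have hu : Summable fun s : G => ‖u s‖ := by
      simpa using (lp.memℓp u).summable h1
    have hsum : Summable fun s : G =>
        ‖((u s s) • lp.single p s (1 : ℂ) : lp (fun _ : G => ℂ) p)‖ :=
      hu.of_nonneg_of_le (fun s => norm_nonneg _) (hbound u)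
    simp only [ENNReal.toReal_one, Real.rpow_one]
    exact hsum
  refine ⟨hmem, ?_⟩
  refine ⟨{ toFun := fun u => mkLp _ (hmem u)
            map_add' := ?_
            map_smul' := ?_ }, ?_, ?_⟩
  · intro u v
    apply lp.ext
    funext s
    simp only [lp.coeFn_add, Pi.add_apply, mkLp_apply]
    exact add_smul _ _ _
  · intro c u
    apply lp.ext
    funext s
    simp only [lp.coeFn_smul, Pi.smul_apply, mkLp_apply, RingHom.id_apply]
    exact smul_assoc _ _ _
  · intro u s
    exact mkLp_apply _ (hmem u) s
  · intro u
    have hΘ := lp.hasSum_norm h1 (mkLp _ (hmem u))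
    have hu := lp.hasSum_norm h1 u
    simp only [ENNReal.toReal_one, Real.rpow_one] at hΘ hu
    refine hasSum_le (fun s => ?_) hΘ hu
    rw [mkLp_apply]
    exact hbound u s
end

section
/- Let G be a group. For a bounded linear operator T on ℓ²(G) and s ∈ G, set δ_s·T := ((T δ_e)(s)) • λ(s), where δ_e = lp.single 2 e 1 is the standard basis vector at the identity e, (T δ_e)(s) denotes the s-th coordinate of the vector T δ_e ∈ ℓ²(G), and λ(s) is the left translation operator. Define a map Θ on ℓ¹(G; B(ℓ²(G))) by Θ(u)(s) = δ_s·(u s). Then for every u ∈ ℓ¹(G; B(ℓ²(G))) the family Θ(u) again belongs to ℓ¹(G; B(ℓ²(G))), the map Θ is linear, and ‖Θ(u)‖ ≤ ‖u‖. -/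
open ENNReal

theorem theta_linear_contraction_operator_valued
    (G : Type*) [Group G] [DecidableEq G]
    (lam : G → (lp (fun _ : G => ℂ) 2 →L[ℂ] lp (fun _ : G => ℂ) 2))
    (hlam : ∀ (s : G) (u : lp (fun _ : G => ℂ) 2) (x : G), lam s u x = u (s⁻¹ * x)) :
    (∀ u : lp (fun _ : G => lp (fun _ : G => ℂ) 2 →L[ℂ] lp (fun _ : G => ℂ) 2) 1,
        Memℓp (fun s : G => ((u s (lp.single 2 (1 : G) (1 : ℂ))) s) • lam s) 1) ∧
    ∃ Θ : lp (fun _ : G => lp (fun _ : G => ℂ) 2 →L[ℂ] lp (fun _ : G => ℂ) 2) 1 →ₗ[ℂ]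
          lp (fun _ : G => lp (fun _ : G => ℂ) 2 →L[ℂ] lp (fun _ : G => ℂ) 2) 1,
      (∀ (u : lp (fun _ : G => lp (fun _ : G => ℂ) 2 →L[ℂ] lp (fun _ : G => ℂ) 2) 1) (s : G),
          Θ u s = ((u s (lp.single 2 (1 : G) (1 : ℂ))) s) • lam s) ∧
      ∀ u : lp (fun _ : G => lp (fun _ : G => ℂ) 2 →L[ℂ] lp (fun _ : G => ℂ) 2) 1,
        ‖Θ u‖ ≤ ‖u‖ := by
  have h2 : (0:ℝ) < (2 : ℝ≥0∞).toReal := by norm_num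
  -- lam s is norm ≤ 1
  have hiso : ∀ (s : G) (v : lp (fun _ : G => ℂ) 2), ‖lam s v‖ = ‖v‖ := by
    intro s v
    rw [lp.norm_eq_tsum_rpow h2, lp.norm_eq_tsum_rpow h2]
    congr 1
    have := (Equiv.mulLeft s⁻¹).tsum_eq (fun x => ‖v x‖ ^ (2:ℝ≥0∞).toReal)
    simp only [Equiv.coe_mulLeft] at this
    rw [← this]
    exact tsum_congr fun x => by rw [hlam]
  have hlamnorm : ∀ s : G, ‖lam s‖ ≤ 1 :=
    fun s => (lam s).opNorm_le_bound zero_le_one (fun v => by rw [hiso, one_mul])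
  have hde : ‖(lp.single 2 (1 : G) (1 : ℂ) : lp (fun _ : G => ℂ) 2)‖ = 1 := by
    have := lp.norm_single (E := fun _ : G => ℂ) (p := 2) (by norm_num) 1 (1:ℂ)
    simpa using this
  -- pointwise bound
  have key : ∀ (u : lp (fun _ : G => lp (fun _ : G => ℂ) 2 →L[ℂ] lp (fun _ : G => ℂ) 2) 1)
      (s : G), ‖((u s (lp.single 2 (1 : G) (1 : ℂ))) s) • lam s‖ ≤ ‖u s‖ := by
    intro u s
    refine (norm_smul_le ((u s (lp.single 2 (1 : G) (1 : ℂ))) s) (lam s)).trans ?_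
    calc ‖(u s (lp.single 2 (1 : G) (1 : ℂ))) s‖ * ‖lam s‖
        ≤ ‖(u s (lp.single 2 (1 : G) (1 : ℂ))) s‖ * 1 :=
          mul_le_mul_of_nonneg_left (hlamnorm s) (norm_nonneg _)
      _ = ‖(u s (lp.single 2 (1 : G) (1 : ℂ))) s‖ := mul_one _
      _ ≤ ‖u s (lp.single 2 (1 : G) (1 : ℂ))‖ := lp.norm_apply_le_norm two_ne_zero _ s
      _ ≤ ‖u s‖ * ‖(lp.single 2 (1 : G) (1 : ℂ) : lp (fun _ : G => ℂ) 2)‖ :=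
          (u s).le_opNorm _
      _ = ‖u s‖ := by rw [hde, mul_one]
  have hsum : ∀ u : lp (fun _ : G => lp (fun _ : G => ℂ) 2 →L[ℂ] lp (fun _ : G => ℂ) 2) 1,
      Summable (fun s : G => ‖u s‖) := by
    intro u
    have := lp.memℓp u
    rw [memℓp_gen_iff (by norm_num : (0:ℝ) < (1:ℝ≥0∞).toReal)] at this
    exact this.congr (fun s => by rw [ENNReal.toReal_one, Real.rpow_one])
  have hmem : ∀ u : lp (fun _ : G => lp (fun _ : G => ℂ) 2 →L[ℂ] lp (fun _ : G => ℂ) 2) 1,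
      Memℓp (fun s : G => ((u s (lp.single 2 (1 : G) (1 : ℂ))) s) • lam s) 1 := by
    intro u
    apply memℓp_gen
    simp only [ENNReal.toReal_one, Real.rpow_one]
    exact (hsum u).of_nonneg_of_le (fun s => norm_nonneg _) (key u)
  refine ⟨hmem, ?_⟩
  refine ⟨{ toFun := fun u => ⟨fun s => ((u s (lp.single 2 (1 : G) (1 : ℂ))) s) • lam s, hmem u⟩
            map_add' := ?_
            map_smul' := ?_ }, fun u s => rfl, ?_⟩
  · intro u v
    apply Subtype.ext
    funext s
    exact add_smul _ _ _
  · intro c u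
    apply Subtype.ext
    funext s
    exact smul_assoc c (((u s (lp.single 2 (1 : G) (1 : ℂ))) s)) (lam s)
  · intro u
    have h1 : (0:ℝ) < (1:ℝ≥0∞).toReal := by norm_num
    refine lp.norm_le_of_forall_sum_le h1 (norm_nonneg u) (fun t => ?_)
    simp only [ENNReal.toReal_one, Real.rpow_one]
    calc ∑ s ∈ t, ‖((u s (lp.single 2 (1 : G) (1 : ℂ))) s) • lam s‖
        ≤ ∑ s ∈ t, ‖u s‖ := Finset.sum_le_sum (fun s _ => key u s)
      _ ≤ ‖u‖ := by
          have := lp.sum_rpow_le_norm_rpow h1 u t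
          simp only [ENNReal.toReal_one, Real.rpow_one] at this
          exact this
end

section
/- Let G be a type and let p be an extended nonnegative real with 1 ≤ p. The diagonal evaluation map π : ℓ¹(G; ℓ^p(G)) → ℓ^p(G) defined by π(u)(t) = u t t (the value at t of the family u(t) ∈ ℓ^p(G)) is well defined (π(u) belongs to ℓ^p(G) for every u ∈ ℓ¹(G; ℓ^p(G))), linear, and satisfies ‖π(u)‖_p ≤ ‖u‖. -/
open ENNReal

private lemma real_add_rpow_le {a b q : ℝ} (ha : 0 ≤ a) (hb : 0 ≤ b) (hq : 1 ≤ q) :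
    a ^ q + b ^ q ≤ (a + b) ^ q := by
  have := NNReal.add_rpow_le_rpow_add ⟨a, ha⟩ ⟨b, hb⟩ hq
  have h' := NNReal.coe_le_coe.mpr this
  push_cast [NNReal.coe_rpow] at h'
  exact h'

private lemma sum_rpow_le_rpow_sum' {ι : Type*} (s : Finset ι) (f : ι → ℝ)
    (hf : ∀ i, 0 ≤ f i) {q : ℝ} (hq : 1 ≤ q) :
    ∑ i ∈ s, f i ^ q ≤ (∑ i ∈ s, f i) ^ q := by
  induction s using Finset.cons_induction with
  | empty => simp [Real.zero_rpow (by linarith : q ≠ 0)]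
  | cons a s ha ih =>
    rw [Finset.sum_cons, Finset.sum_cons]
    calc f a ^ q + ∑ i ∈ s, f i ^ q ≤ f a ^ q + (∑ i ∈ s, f i) ^ q := by linarith
      _ ≤ (f a + ∑ i ∈ s, f i) ^ q :=
        real_add_rpow_le (hf a) (Finset.sum_nonneg fun i _ => hf i) hq

theorem diagonal_evaluation_linear_contraction
    (G : Type*) (p : ℝ≥0∞) [Fact (1 ≤ p)] :
    (∀ u : lp (fun _ : G => lp (fun _ : G => ℂ) p) 1,
        Memℓp (fun t : G => u t t) p) ∧
    ∃ π : lp (fun _ : G => lp (fun _ : G => ℂ) p) 1 →ₗ[ℂ] lp (fun _ : G => ℂ) p,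
      (∀ (u : lp (fun _ : G => lp (fun _ : G => ℂ) p) 1) (t : G), π u t = u t t) ∧
      ∀ u : lp (fun _ : G => lp (fun _ : G => ℂ) p) 1, ‖π u‖ ≤ ‖u‖ := by
  have hp1 : (1 : ℝ≥0∞) ≤ p := Fact.out
  have hp0 : p ≠ 0 := by
    intro h; rw [h] at hp1; exact (not_le.mpr zero_lt_one) hp1
  have key : ∀ (u : lp (fun _ : G => lp (fun _ : G => ℂ) p) 1) (t : G),
      ‖u t t‖ ≤ ‖u t‖ := fun u t => lp.norm_apply_le_norm hp0 (u t) t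
  have hmem1 : ∀ u : lp (fun _ : G => lp (fun _ : G => ℂ) p) 1,
      Memℓp (fun t : G => u t t) 1 := by
    intro u
    apply memℓp_gen
    have hsum : Summable fun t : G => ‖u t‖ := by
      have := (lp.memℓp u).summable (by norm_num : 0 < (1 : ℝ≥0∞).toReal)
      simp only [ENNReal.toReal_one, Real.rpow_one] at this
      exact this
    refine Summable.of_nonneg_of_le (fun t => ?_) (fun t => ?_) hsum
    · positivity
    · simp only [ENNReal.toReal_one, Real.rpow_one]
      exact key u t
  have hmem : ∀ u : lp (fun _ : G => lp (fun _ : G => ℂ) p) 1,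
      Memℓp (fun t : G => u t t) p := fun u => (hmem1 u).of_exponent_ge hp1
  refine ⟨hmem, ?_⟩
  refine ⟨{ toFun := fun u => ⟨fun t => u t t, hmem u⟩
            map_add' := ?_
            map_smul' := ?_ }, ?_, ?_⟩
  · intro u v
    ext t
    simp [lp.coeFn_add]
    rfl
  · intro c u
    ext t
    simp [lp.coeFn_smul]
  · intro u t; rfl
  · intro u
    set f : lp (fun _ : G => ℂ) p := ⟨fun t => u t t, hmem u⟩ with hf
    show ‖f‖ ≤ ‖u‖
    have hft : ∀ t, ‖f t‖ ≤ ‖u t‖ := fun t => key u t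
    have hsum1 : ∀ s : Finset G, ∑ t ∈ s, ‖u t‖ ≤ ‖u‖ := by
      intro s
      have := lp.sum_rpow_le_norm_rpow (by norm_num : 0 < (1 : ℝ≥0∞).toReal) u s
      simp only [ENNReal.toReal_one, Real.rpow_one] at this
      exact this
    rcases eq_or_ne p ∞ with hp | hp
    · subst hp
      refine lp.norm_le_of_forall_le (norm_nonneg u) fun t => ?_
      exact (hft t).trans ((lp.norm_apply_le_norm one_ne_zero u t))
    · have hq : 0 < p.toReal := ENNReal.toReal_pos hp0 hp
      have hq1 : 1 ≤ p.toReal := by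
        have := ENNReal.toReal_mono hp hp1
        simpa using this
      refine lp.norm_le_of_forall_sum_le hq (norm_nonneg u) fun s => ?_
      calc ∑ t ∈ s, ‖f t‖ ^ p.toReal
          ≤ ∑ t ∈ s, ‖u t‖ ^ p.toReal := by
            refine Finset.sum_le_sum fun t _ => ?_
            exact Real.rpow_le_rpow (norm_nonneg _) (hft t) hq.le
        _ ≤ (∑ t ∈ s, ‖u t‖) ^ p.toReal :=
            sum_rpow_le_rpow_sum' s _ (fun t => norm_nonneg _) hq1
        _ ≤ ‖u‖ ^ p.toReal :=
            Real.rpow_le_rpow (Finset.sum_nonneg fun t _ => norm_nonneg _) (hsum1 s) hq.le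
end

section
/- Let G be a type and let p be an extended nonnegative real with 1 < p < ∞. For a finitely supported g : G →₀ ℂ and x ∈ ℓ^p(G), let g·x ∈ ℓ^p(G) be the pointwise product, (g·x)(t) = g t * x t; for u ∈ ℓ¹(G; ℓ^p(G)) let g·u ∈ ℓ¹(G; ℓ^p(G)) be given by (g·u)(t) = (g t) • (u t). Then the following are equivalent: (a) there exists a bounded linear map ρ : ℓ^p(G) → ℓ¹(G; ℓ^p(G)) such that (i) (ρ x) t t = x t for every x ∈ ℓ^p(G) and t ∈ G, and (ii) ρ(g·x) = g·ρ(x) for every finitely supported g : G →₀ ℂ and every x ∈ ℓ^p(G); (b) G is finite. -/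
open ENNReal

-- forward direction as a lemma
private theorem lp_projective_fwd (G : Type*) (p : ℝ≥0∞) [Fact (1 ≤ p)] (hp₁ : 1 < p) (hp₂ : p < ∞)
    (ρ : lp (fun _ : G => ℂ) p →L[ℂ] lp (fun _ : G => lp (fun _ : G => ℂ) p) 1)
    (hi : ∀ (x : lp (fun _ : G => ℂ) p) (t : G), ρ x t t = x t) : Finite G := by
  classical
  have hp0 : p ≠ 0 := (zero_lt_one.trans hp₁).ne'
  have hpt : 1 < p.toReal := by
    rw [← ENNReal.toReal_one]
    exact ENNReal.toReal_lt_toReal one_ne_top hp₂.ne |>.mpr hp₁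
  have hpt0 : 0 < p.toReal := zero_lt_one.trans hpt
  by_contra hfin
  haveI : Infinite G := not_finite_iff_infinite.mp hfin
  set C : ℝ := ‖ρ‖ ^ p.toReal with hC
  have hC0 : 0 ≤ C := Real.rpow_nonneg (norm_nonneg _) _
  obtain ⟨m, hm⟩ := exists_nat_gt (max 1 (C ^ (1 / (p.toReal - 1))))
  obtain ⟨F, hFcard⟩ := Infinite.exists_subset_card_eq G m
  set x : lp (fun _ : G => ℂ) p := ∑ t ∈ F, lp.single p t (1 : ℂ) with hxdef
  have hx : ∀ t ∈ F, x t = 1 := by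
    intro t ht
    rw [hxdef]
    rw [lp.coeFn_sum]
    simp only [Finset.sum_apply, lp.single_apply, Finset.sum_dite_eq]
    simp [ht]
  have hxnorm : ‖x‖ ^ p.toReal = (m : ℝ) := by
    rw [hxdef, lp.norm_sum_single hpt0 (fun _ => (1:ℂ)) F]
    simp [hFcard]
  have hlow : (m : ℝ) ≤ ‖ρ x‖ := by
    have h1 : ∀ t ∈ F, (1 : ℝ) ≤ ‖(ρ x) t‖ := by
      intro t ht
      have h := lp.norm_apply_le_norm hp0 ((ρ x) t) t
      rw [hi x t, hx t ht] at h
      simpa using h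
    have h2 : ∑ t ∈ F, ‖(ρ x) t‖ ≤ ‖ρ x‖ := by
      have h := lp.sum_rpow_le_norm_rpow (p := 1)
        (by norm_num : (0:ℝ) < (1:ℝ≥0∞).toReal) (ρ x) F
      simp only [ENNReal.toReal_one, Real.rpow_one] at h
      exact h
    calc (m : ℝ) = ∑ _t ∈ F, (1:ℝ) := by simp [hFcard]
      _ ≤ ∑ t ∈ F, ‖(ρ x) t‖ := Finset.sum_le_sum h1
      _ ≤ ‖ρ x‖ := h2
  have hmain : (m : ℝ) ≤ ‖ρ‖ * ‖x‖ := hlow.trans (ρ.le_opNorm x)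
  have hste : (m : ℝ) ^ p.toReal ≤ C * (m : ℝ) := by
    calc (m : ℝ) ^ p.toReal ≤ (‖ρ‖ * ‖x‖) ^ p.toReal :=
          Real.rpow_le_rpow (Nat.cast_nonneg m) hmain hpt0.le
      _ = C * ‖x‖ ^ p.toReal := by
          rw [Real.mul_rpow (norm_nonneg _) (norm_nonneg _)]
      _ = C * (m : ℝ) := by rw [hxnorm]
  have hm1 : (1 : ℝ) < (m : ℝ) := lt_of_le_of_lt (le_max_left _ _) hm
  have hm0 : (0 : ℝ) < (m : ℝ) := zero_lt_one.trans hm1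
  have hsplit : (m : ℝ) ^ p.toReal = (m : ℝ) ^ (p.toReal - 1) * (m : ℝ) := by
    nth_rewrite 3 [← Real.rpow_one (m:ℝ)]
    rw [← Real.rpow_add hm0]
    ring_nf
  have hkey : (m : ℝ) ^ (p.toReal - 1) ≤ C := by
    rw [hsplit] at hste
    exact le_of_mul_le_mul_right hste hm0
  have hbig : C < (m : ℝ) ^ (p.toReal - 1) := by
    have h1 : C ^ (1 / (p.toReal - 1)) < (m : ℝ) :=
      lt_of_le_of_lt (le_max_right _ _) hm
    have h2 : (C ^ (1 / (p.toReal - 1))) ^ (p.toReal - 1) < (m : ℝ) ^ (p.toReal - 1) :=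
      Real.rpow_lt_rpow (Real.rpow_nonneg hC0 _) h1 (by linarith)
    rwa [← Real.rpow_mul hC0, one_div, inv_mul_cancel₀ (by linarith : p.toReal - 1 ≠ 0),
      Real.rpow_one] at h2
  exact absurd hkey (not_le.mpr hbig)

private theorem lp_projective_bwd (G : Type*) (p : ℝ≥0∞) [Fact (1 ≤ p)] (hp₁ : 1 < p) (hp₂ : p < ∞) (hG : Finite G) :
    (∃ ρ : lp (fun _ : G => ℂ) p →L[ℂ] lp (fun _ : G => lp (fun _ : G => ℂ) p) 1,
        (∀ (x : lp (fun _ : G => ℂ) p) (t : G), ρ x t t = x t) ∧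
        (∀ (g : G →₀ ℂ) (x x' : lp (fun _ : G => ℂ) p),
          (∀ t : G, x' t = g t * x t) →
            ∀ s : G, ρ x' s = g s • ρ x s)) := by
  classical
  have hp0 : p ≠ 0 := (zero_lt_one.trans hp₁).ne'
  have hpt : 1 < p.toReal := by
    rw [← ENNReal.toReal_one]
    exact ENNReal.toReal_lt_toReal one_ne_top hp₂.ne |>.mpr hp₁
  have hpt0 : 0 < p.toReal := zero_lt_one.trans hpt
  haveI := Fintype.ofFinite G
  have mem : ∀ x : lp (fun _ : G => ℂ) p,
      Memℓp (fun s : G => lp.single (E := fun _ : G => ℂ) p s (x s)) 1 :=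
    fun x => memℓp_gen Summable.of_finite
  have hsadd : ∀ (s : G) (a b : ℂ),
      lp.single (E := fun _ : G => ℂ) p s (a + b) = lp.single p s a + lp.single p s b := by
    intro s a b
    apply lp.ext
    funext t
    rw [lp.coeFn_add, Pi.add_apply]
    by_cases h : t = s
    · subst h
      rw [lp.single_apply_self, lp.single_apply_self, lp.single_apply_self]
    · rw [lp.single_apply_ne p s _ h, lp.single_apply_ne p s _ h, lp.single_apply_ne p s _ h,
        add_zero]
  set L : lp (fun _ : G => ℂ) p →ₗ[ℂ] lp (fun _ : G => lp (fun _ : G => ℂ) p) 1 :=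
    { toFun := fun x => ⟨fun s => lp.single p s (x s), mem x⟩
      map_add' := by
        intro x y
        apply lp.ext
        funext s
        simp only [lp.coeFn_add, Pi.add_apply]
        show lp.single (E := fun _ : G => ℂ) p s ((x + y) s) = lp.single (E := fun _ : G => ℂ) p s (x s) + lp.single (E := fun _ : G => ℂ) p s (y s)
        rw [lp.coeFn_add, Pi.add_apply, hsadd]
      map_smul' := by
        intro c x
        apply lp.ext
        funext s
        simp only [lp.coeFn_smul, Pi.smul_apply, RingHom.id_apply]
        show lp.single (E := fun _ : G => ℂ) p s ((c • x) s) = c • lp.single (E := fun _ : G => ℂ) p s (x s)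
        rw [lp.coeFn_smul, Pi.smul_apply, ← lp.single_smul] } with hL
  have hLapply : ∀ (x : lp (fun _ : G => ℂ) p) (s : G),
      L x s = lp.single p s (x s) := fun x s => rfl
  have hbound : ∀ x : lp (fun _ : G => ℂ) p,
      ‖L x‖ ≤ (Fintype.card G : ℝ) * ‖x‖ := by
    intro x
    have hs := lp.hasSum_norm (p := 1) (by norm_num) (L x)
    simp only [ENNReal.toReal_one, Real.rpow_one] at hs
    have heq : ‖L x‖ = ∑ s : G, ‖L x s‖ := hs.unique (hasSum_fintype _)
    rw [heq]
    calc ∑ s : G, ‖L x s‖ ≤ ∑ _s : G, ‖x‖ := by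
          apply Finset.sum_le_sum
          intro s _
          rw [hLapply]; refine (lp.norm_single (E := fun _ : G => ℂ) (zero_lt_one.trans hp₁) s (x s)).trans_le ?_
          exact lp.norm_apply_le_norm hp0 x s
      _ = (Fintype.card G : ℝ) * ‖x‖ := by
          rw [Finset.sum_const, nsmul_eq_mul, Finset.card_univ]
  refine ⟨L.mkContinuous (Fintype.card G : ℝ) hbound, ?_, ?_⟩
  · intro x t
    show (L x) t t = x t
    rw [hLapply]
    exact lp.single_apply_self (E := fun _ : G => ℂ) p t (x t)
  · intro g x x' hxx' s
    show lp.single (E := fun _ : G => ℂ) p s (x' s) = g s • lp.single (E := fun _ : G => ℂ) p s (x s)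
    rw [← lp.single_smul, hxx' s]
    rfl

theorem lp_projective_iff_finite
    (G : Type*) (p : ℝ≥0∞) [Fact (1 ≤ p)] (hp₁ : 1 < p) (hp₂ : p < ∞) :
    (∃ ρ : lp (fun _ : G => ℂ) p →L[ℂ] lp (fun _ : G => lp (fun _ : G => ℂ) p) 1,
        (∀ (x : lp (fun _ : G => ℂ) p) (t : G), ρ x t t = x t) ∧
        (∀ (g : G →₀ ℂ) (x x' : lp (fun _ : G => ℂ) p),
          (∀ t : G, x' t = g t * x t) →
            ∀ s : G, ρ x' s = g s • ρ x s)) ↔ Finite G := by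
  constructor
  · rintro ⟨ρ, hi, -⟩
    exact lp_projective_fwd G p hp₁ hp₂ ρ hi
  · exact lp_projective_bwd G p hp₁ hp₂
end

section
/- Let G be a type. For a finitely supported g : G →₀ ℂ and x ∈ ℓ^∞(G), let g·x ∈ ℓ^∞(G) be the pointwise product, (g·x)(t) = g t * x t. Then the following are equivalent: (a) there exist bounded linear maps ρ₁ : ℓ^∞(G) → ℓ¹(G; ℓ^∞(G)) and ρ₂ : ℓ^∞(G) → ℓ^∞(G) such that (i) (ρ₁ x) t t + (ρ₂ x) t = x t for every x ∈ ℓ^∞(G) and t ∈ G, and (ii) for every finitely supported g : G →₀ ℂ and every x ∈ ℓ^∞(G), ρ₂(g·x) = 0 and (ρ₁(g·x))(s) = (g s) • ((ρ₁ x) s) + (g s) • (ρ₂ x) for every s ∈ G; (b) G is finite. -/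
open ENNReal

set_option synthInstance.maxHeartbeats 400000
set_option maxHeartbeats 1000000

section Aux

variable {G : Type*}

lemma aux_mem_infty [Finite G] (f : G → ℂ) : Memℓp f ∞ :=
  memℓp_infty (Set.finite_range _).bddAbove

lemma aux_mem_one [Finite G] (f : G → lp (fun _ : G => ℂ) ∞) : Memℓp f 1 :=
  memℓp_gen (by exact Summable.of_finite)

/-- coercion as linear equiv, for finiteness transfer -/
noncomputable def lpInftyEquiv (G : Type*) [Finite G] :
    lp (fun _ : G => ℂ) ∞ ≃ₗ[ℂ] (G → ℂ) where
  toFun f := ⇑f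
  map_add' f g := lp.coeFn_add f g
  map_smul' c f := lp.coeFn_smul c f
  invFun f := ⟨f, aux_mem_infty f⟩
  left_inv _ := rfl
  right_inv _ := rfl

noncomputable def diagLM (G : Type*) [Finite G] [DecidableEq G] :
    lp (fun _ : G => ℂ) ∞ →ₗ[ℂ] lp (fun _ : G => lp (fun _ : G => ℂ) ∞) 1 where
  toFun x := ⟨fun s => ⟨fun t => if t = s then x t else 0, aux_mem_infty _⟩, aux_mem_one _⟩
  map_add' x y := by
    apply lp.ext
    funext s
    apply lp.ext
    funext t
    have h : (x + y : lp (fun _ : G => ℂ) ∞) t = x t + y t := rfl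
    show (if t = s then (x + y : lp (fun _ : G => ℂ) ∞) t else 0) =
      (if t = s then x t else 0) + (if t = s then y t else 0)
    rw [h]
    by_cases hts : t = s <;> simp [hts]
  map_smul' c x := by
    apply lp.ext
    funext s
    apply lp.ext
    funext t
    have h : (c • x : lp (fun _ : G => ℂ) ∞) t = c * x t := rfl
    show (if t = s then (c • x : lp (fun _ : G => ℂ) ∞) t else 0) =
      c * (if t = s then x t else 0)
    rw [h]
    by_cases hts : t = s <;> simp [hts]

end Aux

theorem linfty_projective_iff_finite (G : Type*) :
    (∃ (ρ₁ : lp (fun _ : G => ℂ) ∞ →L[ℂ] lp (fun _ : G => lp (fun _ : G => ℂ) ∞) 1)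
       (ρ₂ : lp (fun _ : G => ℂ) ∞ →L[ℂ] lp (fun _ : G => ℂ) ∞),
        (∀ (x : lp (fun _ : G => ℂ) ∞) (t : G), ρ₁ x t t + ρ₂ x t = x t) ∧
        (∀ (g : G →₀ ℂ) (x x' : lp (fun _ : G => ℂ) ∞),
          (∀ t : G, x' t = g t * x t) →
            ρ₂ x' = 0 ∧ ∀ s : G, ρ₁ x' s = g s • (ρ₁ x s) + g s • (ρ₂ x))) ↔
      Finite G := by
  classical
  constructor
  · rintro ⟨ρ₁, ρ₂, h1, h2⟩
    by_contra hinf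
    have : Infinite G := not_finite_iff_infinite.mp hinf
    -- constant one function
    have hmem1 : Memℓp (fun _ : G => (1 : ℂ)) ∞ :=
      memℓp_infty ⟨1, by rintro r ⟨i, rfl⟩; simp⟩
    set x1 : lp (fun _ : G => ℂ) ∞ := ⟨fun _ => (1 : ℂ), hmem1⟩ with hx1
    obtain ⟨A, hA⟩ := Infinite.exists_subset_card_eq G (⌈‖ρ₁‖⌉₊ + 1)
    set g : G →₀ ℂ := ⟨A, fun t => if t ∈ A then 1 else 0, by intro a; simp⟩ with hg
    have hmem' : Memℓp (fun t : G => if t ∈ A then (1 : ℂ) else 0) ∞ :=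
      memℓp_infty ⟨1, by rintro r ⟨i, rfl⟩; dsimp; by_cases hi : i ∈ A <;> simp [hi]⟩
    set x' : lp (fun _ : G => ℂ) ∞ := ⟨fun t => if t ∈ A then (1 : ℂ) else 0, hmem'⟩ with hx'
    have hrel : ∀ t : G, x' t = g t * x1 t := by
      intro t
      show (if t ∈ A then (1 : ℂ) else 0) = (if t ∈ A then (1 : ℂ) else 0) * 1
      rw [mul_one]
    obtain ⟨hz, hs⟩ := h2 g x1 x' hrel
    have key : ∀ t ∈ A, (1 : ℝ) ≤ ‖ρ₁ x' t‖ := by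
      intro t ht
      have hg1 : g t = 1 := by show (if t ∈ A then (1 : ℂ) else 0) = 1; simp [ht]
      have e1 : ρ₁ x' t = ρ₁ x1 t + ρ₂ x1 := by rw [hs t, hg1, one_smul, one_smul]
      have e2 : (ρ₁ x' t) t = 1 := by
        rw [e1]
        have h3 : (ρ₁ x1 t + ρ₂ x1 : lp (fun _ : G => ℂ) ∞) t = ρ₁ x1 t t + ρ₂ x1 t := rfl
        rw [h3, h1 x1 t]
      calc (1 : ℝ) = ‖(ρ₁ x' t) t‖ := by rw [e2]; simp
        _ ≤ ‖ρ₁ x' t‖ := lp.norm_apply_le_norm ENNReal.top_ne_zero _ t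
    have hsum : (A.card : ℝ) ≤ ‖ρ₁ x'‖ := by
      have h0 : (0 : ℝ) < (1 : ℝ≥0∞).toReal := by norm_num
      have h4 := lp.sum_rpow_le_norm_rpow h0 (ρ₁ x') A
      simp only [ENNReal.toReal_one, Real.rpow_one] at h4
      calc (A.card : ℝ) = ∑ _t ∈ A, (1 : ℝ) := by simp
        _ ≤ ∑ t ∈ A, ‖ρ₁ x' t‖ := Finset.sum_le_sum key
        _ ≤ ‖ρ₁ x'‖ := h4
    have hx'norm : ‖x'‖ ≤ 1 := by
      rw [lp.norm_eq_ciSup]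
      refine ciSup_le fun i => ?_
      show ‖(if i ∈ A then (1 : ℂ) else 0)‖ ≤ 1
      by_cases hi : i ∈ A <;> simp [hi]
    have hbound : ‖ρ₁ x'‖ ≤ ‖ρ₁‖ := by
      calc ‖ρ₁ x'‖ ≤ ‖ρ₁‖ * ‖x'‖ := ρ₁.le_opNorm x'
        _ ≤ ‖ρ₁‖ * 1 := by nlinarith [norm_nonneg ρ₁]
        _ = ‖ρ₁‖ := mul_one _
    have hceil : ‖ρ₁‖ ≤ (⌈‖ρ₁‖⌉₊ : ℝ) := Nat.le_ceil _
    rw [hA] at hsum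
    push_cast at hsum
    linarith
  · intro hfin
    haveI := Fintype.ofFinite G
    haveI : FiniteDimensional ℂ (lp (fun _ : G => ℂ) ∞) :=
      (lpInftyEquiv G).symm.finiteDimensional
    refine ⟨(diagLM G).toContinuousLinearMap, 0, ?_, ?_⟩
    · intro x t
      show (if t = t then x t else 0) + (0 : lp (fun _ : G => ℂ) ∞) t = x t
      simp
    · intro g x x' hrel
      refine ⟨rfl, fun s => ?_⟩
      apply lp.ext
      funext t
      show (if t = s then x' t else 0) =
        (g s • ((diagLM G).toContinuousLinearMap x s) +
          g s • ((0 : lp (fun _ : G => ℂ) ∞ →L[ℂ] lp (fun _ : G => ℂ) ∞) x)) t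
      have hr : (g s • ((diagLM G).toContinuousLinearMap x s) +
          g s • ((0 : lp (fun _ : G => ℂ) ∞ →L[ℂ] lp (fun _ : G => ℂ) ∞) x)) t
          = g s * (if t = s then x t else 0) := by
        show g s * (if t = s then x t else 0) + g s * (0 : G → ℂ) t = _
        simp
      rw [hr, hrel t]
      by_cases h : t = s
      · rw [if_pos h, if_pos h, h]
      · rw [if_neg h, if_neg h, mul_zero]
end
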